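/- The inverse of the multiple almost-Riordan array (b | g; f₁, …, f_ℓ) is (1/b₀ + (f_ℓ(h̄)/(b₀ h̄ g(h̄)))·(b₀ − b(h̄)) | 1/g(h̄); h̄·t/f₁(h̄), …, h̄·t/f_ℓ(h̄)), where b₀ = b(0) ≠ 0 and h̄ is the compositional inverse of h = (f₁⋯f_ℓ)^{1/ℓ}. -/

import Mathlib

open PowerSeries

/-- Composition `g ∘ f` of formal power series (meaningful when `f` has zero
constant term). -/
noncomputable def pcomp {K : Type*} [Field K] (g f : PowerSeries K) : PowerSeries K :=
  PowerSeries.mk fun n => ∑ k ∈ Finset.range (n + 1), coeff k g * coeff n (f ^ k)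

/-- `f/t`: the coefficient shift of a power series. -/
noncomputable def pdivX {K : Type*} [Field K] (f : PowerSeries K) : PowerSeries K :=
  PowerSeries.mk fun n => coeff (n + 1) f

/-- `g ∈ K[[t^ℓ]]`. -/
def InTl {K : Type*} [Field K] (ℓ : ℕ) (g : PowerSeries K) : Prop :=
  ∀ n : ℕ, ¬ ℓ ∣ n → coeff n g = 0

/-- A multiplier function: `f ∈ t·K[[t^ℓ]]` with `f'(0) ≠ 0`. -/
def IsMult {K : Type*} [Field K] (ℓ : ℕ) (f : PowerSeries K) : Prop :=
  constantCoeff f = 0 ∧ (∀ n : ℕ, n % ℓ ≠ 1 % ℓ → coeff n f = 0) ∧ coeff 1 f ≠ 0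

/-- The multiple almost-Riordan product (with `ℓ = m + 1`). -/
noncomputable def maMul {K : Type*} [Field K] {m : ℕ}
    (p q : PowerSeries K × PowerSeries K × (Fin (m + 1) → PowerSeries K) × PowerSeries K) :
    PowerSeries K × PowerSeries K × (Fin (m + 1) → PowerSeries K) × PowerSeries K :=
  (C (constantCoeff q.1) * p.1 +
      p.2.1 * (pdivX (p.2.2.1 (Fin.last m)))⁻¹ *
        (pcomp q.1 p.2.2.2 - C (constantCoeff q.1)),
    p.2.1 * pcomp q.2.1 p.2.2.2,
    fun j => pdivX (p.2.2.1 j) * (pdivX p.2.2.2)⁻¹ * pcomp (q.2.2.1 j) p.2.2.2,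
    pcomp q.2.2.2 p.2.2.2)

section Aux
variable {K : Type*} [Field K]

lemma coeff_pcomp (g f : PowerSeries K) (n : ℕ) :
    coeff n (pcomp g f) = ∑ k ∈ Finset.range (n + 1), coeff k g * coeff n (f ^ k) := by
  simp [pcomp]

lemma coeff_pow_eq_zero {f : PowerSeries K} (hf : constantCoeff f = 0) {n k : ℕ}
    (h : n < k) : coeff n (f ^ k) = 0 := by
  have hdvd : (X : PowerSeries K) ^ k ∣ f ^ k :=
    pow_dvd_pow_of_dvd (PowerSeries.X_dvd_iff.2 hf) k
  exact PowerSeries.X_pow_dvd_iff.1 hdvd n h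

lemma coeff_pcomp_eq_sum {f : PowerSeries K} (hf : constantCoeff f = 0)
    (g : PowerSeries K) {n N : ℕ} (h : n < N) :
    coeff n (pcomp g f) =
      coeff n (∑ k ∈ Finset.range N, C (coeff k g) * f ^ k) := by
  rw [coeff_pcomp, map_sum]
  simp only [coeff_C_mul]
  rw [Finset.sum_subset (Finset.range_subset_range.2 h)]
  intro k hk hk'
  rw [Finset.mem_range] at hk hk'
  rw [coeff_pow_eq_zero hf (by omega), mul_zero]

lemma constantCoeff_pcomp (g f : PowerSeries K) :
    constantCoeff (pcomp g f) = constantCoeff g := by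
  rw [← coeff_zero_eq_constantCoeff_apply, coeff_pcomp]
  simp

lemma coeff_one_pcomp (g f : PowerSeries K) :
    coeff 1 (pcomp g f) = coeff 1 g * coeff 1 f := by
  rw [coeff_pcomp]
  simp [Finset.sum_range_succ, coeff_one]

lemma pcomp_C (c : K) (f : PowerSeries K) : pcomp (C c) f = C c := by
  ext n
  rw [coeff_pcomp, Finset.sum_eq_single 0]
  · simp [coeff_C]
  · intro k _ hk
    simp [coeff_C, hk]
  · simp

lemma pcomp_one (f : PowerSeries K) : pcomp 1 f = 1 := by
  have := pcomp_C (1 : K) f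
  rwa [map_one] at this

lemma pcomp_add (a b f : PowerSeries K) : pcomp (a + b) f = pcomp a f + pcomp b f := by
  ext n
  simp [coeff_pcomp, add_mul, Finset.sum_add_distrib]

lemma pcomp_sub (a b f : PowerSeries K) : pcomp (a - b) f = pcomp a f - pcomp b f := by
  ext n
  simp [coeff_pcomp, sub_mul, Finset.sum_sub_distrib]

lemma pcomp_sum {ι : Type*} (s : Finset ι) (F : ι → PowerSeries K) (f : PowerSeries K) :
    pcomp (∑ i ∈ s, F i) f = ∑ i ∈ s, pcomp (F i) f := by
  ext n
  rw [coeff_pcomp, map_sum]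
  simp only [coeff_pcomp, map_sum, Finset.sum_mul]
  exact Finset.sum_comm

lemma pcomp_X {f : PowerSeries K} (hf : constantCoeff f = 0) : pcomp X f = f := by
  ext n
  rw [coeff_pcomp, Finset.sum_eq_single 1]
  · simp
  · intro k _ hk
    simp [coeff_X, hk]
  · intro h1
    rw [Finset.mem_range] at h1
    have : n = 0 := by omega
    simp [this, coeff_X, hf]

lemma pcomp_id (a : PowerSeries K) : pcomp a X = a := by
  ext n
  rw [coeff_pcomp, Finset.sum_eq_single n]
  · simp
  · intro k _ hk
    rw [coeff_X_pow, if_neg (fun h => hk h.symm), mul_zero]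
  · intro hn
    simp at hn

lemma pcomp_mul {f : PowerSeries K} (hf : constantCoeff f = 0) (a b : PowerSeries K) :
    pcomp (a * b) f = pcomp a f * pcomp b f := by
  ext n
  set N := n + 1 with hN
  set Sa := ∑ k ∈ Finset.range N, C (coeff k a) * f ^ k with hSa
  set Sb := ∑ k ∈ Finset.range N, C (coeff k b) * f ^ k with hSb
  have hRHS : coeff n (pcomp a f * pcomp b f) = coeff n (Sa * Sb) := by
    rw [PowerSeries.coeff_mul, PowerSeries.coeff_mul]
    exact Finset.sum_congr rfl fun p hp => by
      rw [Finset.HasAntidiagonal.mem_antidiagonal] at hp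
      rw [coeff_pcomp_eq_sum hf a (show p.1 < N by omega),
        coeff_pcomp_eq_sum hf b (show p.2 < N by omega)]
  rw [hRHS, coeff_pcomp_eq_sum hf (a * b) (show n < 2 * N by omega), hSa, hSb,
    Finset.sum_mul_sum]
  have hterm : ∀ p q : ℕ, (C (coeff p a) * f ^ p) * (C (coeff q b) * f ^ q)
      = C (coeff p a * coeff q b) * f ^ (p + q) := by
    intro p q; rw [pow_add, map_mul]; ring
  simp only [hterm]
  simp only [map_sum, coeff_C_mul]
  simp only [PowerSeries.coeff_mul, Finset.sum_mul]
  have hL : ∀ k ∈ Finset.range (2 * N),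
      ∑ p ∈ Finset.HasAntidiagonal.antidiagonal k, coeff p.1 a * coeff p.2 b * coeff n (f ^ k)
        = ∑ p ∈ Finset.HasAntidiagonal.antidiagonal k,
            coeff p.1 a * coeff p.2 b * coeff n (f ^ (p.1 + p.2)) := by
    intro k _
    exact Finset.sum_congr rfl fun p hp => by
      rw [Finset.HasAntidiagonal.mem_antidiagonal] at hp; rw [hp]
  rw [Finset.sum_congr rfl hL]
  have hdisj : (↑(Finset.range (2 * N)) : Set ℕ).PairwiseDisjoint Finset.HasAntidiagonal.antidiagonal := by
    intro i _ j _ hij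
    rw [Function.onFun, Finset.disjoint_left]
    intro p hpi hpj
    rw [Finset.HasAntidiagonal.mem_antidiagonal] at hpi hpj
    exact hij (hpi ▸ hpj.symm ▸ rfl)
  rw [← Finset.sum_biUnion hdisj]
  rw [← Finset.sum_product']
  symm
  apply Finset.sum_subset
  · intro p hp
    rw [Finset.mem_product, Finset.mem_range, Finset.mem_range] at hp
    rw [Finset.mem_biUnion]
    exact ⟨p.1 + p.2, Finset.mem_range.2 (by omega), Finset.HasAntidiagonal.mem_antidiagonal.2 rfl⟩
  · intro p hp hp'
    rw [Finset.mem_biUnion] at hp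
    rw [Finset.mem_product, Finset.mem_range, Finset.mem_range] at hp'
    obtain ⟨k, hk, hpk⟩ := hp
    rw [Finset.HasAntidiagonal.mem_antidiagonal] at hpk
    have : n < p.1 + p.2 := by
      by_contra hle
      exact hp' ⟨by omega, by omega⟩
    rw [coeff_pow_eq_zero hf this, mul_zero]

lemma pcomp_pow {f : PowerSeries K} (hf : constantCoeff f = 0) (a : PowerSeries K) (k : ℕ) :
    pcomp (a ^ k) f = pcomp a f ^ k := by
  induction k with
  | zero => simp [pcomp_one]
  | succ k ih => rw [pow_succ, pcomp_mul hf, ih, pow_succ]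

lemma pcomp_inv {f : PowerSeries K} (hf : constantCoeff f = 0) {a : PowerSeries K}
    (ha : constantCoeff a ≠ 0) : pcomp a⁻¹ f = (pcomp a f)⁻¹ := by
  rw [PowerSeries.eq_inv_iff_mul_eq_one (by rwa [constantCoeff_pcomp])]
  rw [← pcomp_mul hf, PowerSeries.inv_mul_cancel a ha, pcomp_one]

lemma pcomp_congr {A B : PowerSeries K} (g : PowerSeries K) {n : ℕ}
    (h : ∀ k ≤ n, coeff k A = coeff k B) :
    coeff n (pcomp A g) = coeff n (pcomp B g) := by
  rw [coeff_pcomp, coeff_pcomp]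
  exact Finset.sum_congr rfl fun k hk => by
    rw [Finset.mem_range] at hk; rw [h k (by omega)]

lemma pcomp_assoc {f g : PowerSeries K} (hf : constantCoeff f = 0)
    (hg : constantCoeff g = 0) (a : PowerSeries K) :
    pcomp (pcomp a f) g = pcomp a (pcomp f g) := by
  ext n
  rw [pcomp_congr g (fun k hk => coeff_pcomp_eq_sum hf a (show k < n + 1 by omega))]
  rw [pcomp_sum]
  have hfg0 : constantCoeff (pcomp f g) = 0 := by rw [constantCoeff_pcomp]; exact hf
  rw [coeff_pcomp_eq_sum hfg0 a (show n < n + 1 by omega)]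
  congr 1
  exact Finset.sum_congr rfl fun k _ => by
    rw [pcomp_mul hg, pcomp_C, pcomp_pow hg]

lemma X_mul_pdivX {A : PowerSeries K} (h : constantCoeff A = 0) : X * pdivX A = A := by
  ext n
  cases n with
  | zero => simp [coeff_zero_eq_constantCoeff_apply, h, constantCoeff_X]
  | succ n => rw [coeff_succ_X_mul]; simp [pdivX]

lemma pdivX_X_mul (u : PowerSeries K) : pdivX (X * u) = u := by
  ext n
  simp [pdivX, coeff_succ_X_mul]

lemma constantCoeff_pdivX (A : PowerSeries K) :
    constantCoeff (pdivX A) = coeff 1 A := by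
  rw [← coeff_zero_eq_constantCoeff_apply]
  simp [pdivX]

lemma pdivX_mul {A : PowerSeries K} (h : constantCoeff A = 0) (u : PowerSeries K) :
    pdivX (A * u) = pdivX A * u := by
  conv_lhs => rw [← X_mul_pdivX h, mul_assoc]
  rw [pdivX_X_mul]

end Aux

/-- The inverse of `(b | g; f₁, …, f_ℓ)` in the multiple almost-Riordan group is
`(1/b₀ + (f_ℓ(h̄)/(b₀ h̄ g(h̄)))·(b₀ − b(h̄)) | 1/g(h̄); h̄·t/f₁(h̄), …, h̄·t/f_ℓ(h̄))`,
where `b₀ = b(0) ≠ 0` and `h̄` is the compositional inverse of `h = (f₁⋯f_ℓ)^{1/ℓ}`.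
(Here `f_ℓ(h̄)/h̄ = (f_ℓ(h̄)/t)·(h̄/t)⁻¹` and `h̄·t/f_j(h̄) = h̄·((f_j(h̄))/t)⁻¹`.) -/
theorem multiple_almost_riordan_inverse {K : Type*} [Field K] [CharZero K] (m : ℕ)
    (b g : PowerSeries K) (f : Fin (m + 1) → PowerSeries K) (h hbar : PowerSeries K)
    (hp : InTl (m + 1) b ∧ constantCoeff b ≠ 0 ∧
      InTl (m + 1) g ∧ constantCoeff g ≠ 0 ∧
      (∀ j, IsMult (m + 1) (f j)) ∧ IsMult (m + 1) h ∧ h ^ (m + 1) = ∏ j, f j)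
    (hbar0 : constantCoeff hbar = 0)
    (hinv1 : pcomp h hbar = X) (hinv2 : pcomp hbar h = X) :
    maMul (b, g, f, h)
        ((C (constantCoeff b))⁻¹ +
            pdivX (pcomp (f (Fin.last m)) hbar) * (pdivX hbar)⁻¹ *
              (C (constantCoeff b))⁻¹ * (pcomp g hbar)⁻¹ *
              (C (constantCoeff b) - pcomp b hbar),
          (pcomp g hbar)⁻¹,
          fun j => hbar * (pdivX (pcomp (f j) hbar))⁻¹, hbar) =
      (1, 1, fun _ => X, X) ∧
    maMul ((C (constantCoeff b))⁻¹ +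
            pdivX (pcomp (f (Fin.last m)) hbar) * (pdivX hbar)⁻¹ *
              (C (constantCoeff b))⁻¹ * (pcomp g hbar)⁻¹ *
              (C (constantCoeff b) - pcomp b hbar),
          (pcomp g hbar)⁻¹,
          fun j => hbar * (pdivX (pcomp (f j) hbar))⁻¹, hbar)
        (b, g, f, h) =
      (1, 1, fun _ => X, X) := by
  obtain ⟨hbT, hb0, hgT, hg0, hfm, hhm, hprodeq⟩ := hp
  set b0 := constantCoeff b with hb0def
  have hh0 : constantCoeff h = 0 := hhm.1
  have hh1 : coeff 1 h ≠ 0 := hhm.2.2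
  have hf0 : ∀ j, constantCoeff (f j) = 0 := fun j => (hfm j).1
  have hf1 : ∀ j, coeff 1 (f j) ≠ 0 := fun j => (hfm j).2.2
  have hbar1 : coeff 1 hbar ≠ 0 := by
    have h3 := congrArg (coeff 1) hinv2
    rw [coeff_one_pcomp, coeff_one_X] at h3
    exact left_ne_zero_of_mul_eq_one h3
  have hB0 : ∀ j, constantCoeff (pcomp (f j) hbar) = 0 := fun j => by
    rw [constantCoeff_pcomp]; exact hf0 j
  have hB1 : ∀ j, coeff 1 (pcomp (f j) hbar) ≠ 0 := fun j => by
    rw [coeff_one_pcomp]; exact mul_ne_zero (hf1 j) hbar1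
  have hdh : constantCoeff (pdivX h) ≠ 0 := by rw [constantCoeff_pdivX]; exact hh1
  have hdbar : constantCoeff (pdivX hbar) ≠ 0 := by rw [constantCoeff_pdivX]; exact hbar1
  have hdB : ∀ j, constantCoeff (pdivX (pcomp (f j) hbar)) ≠ 0 := fun j => by
    rw [constantCoeff_pdivX]; exact hB1 j
  have hdf : ∀ j, constantCoeff (pdivX (f j)) ≠ 0 := fun j => by
    rw [constantCoeff_pdivX]; exact hf1 j
  have hG : constantCoeff (pcomp g hbar) ≠ 0 := by rw [constantCoeff_pcomp]; exact hg0
  -- compositions collapse under `h`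
  have Eg : pcomp (pcomp g hbar) h = g := by rw [pcomp_assoc hbar0 hh0, hinv2, pcomp_id]
  have Eb : pcomp (pcomp b hbar) h = b := by rw [pcomp_assoc hbar0 hh0, hinv2, pcomp_id]
  have Ef : ∀ j, pcomp (pcomp (f j) hbar) h = f j := fun j => by
    rw [pcomp_assoc hbar0 hh0, hinv2, pcomp_id]
  have hP : ∀ j, h * pcomp (pdivX (pcomp (f j) hbar)) h = f j := fun j => by
    have h4 := congrArg (fun A => pcomp A h) (X_mul_pdivX (hB0 j))
    simpa [pcomp_mul hh0, pcomp_X hh0, Ef j] using h4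
  have hPd : ∀ j, pdivX h * pcomp (pdivX (pcomp (f j) hbar)) h = pdivX (f j) := fun j => by
    apply mul_left_cancel₀ (PowerSeries.X_ne_zero (R := K))
    rw [← mul_assoc, X_mul_pdivX hh0, hP j, X_mul_pdivX (hf0 j)]
  have hQ : pdivX h * pcomp (pdivX hbar) h = 1 := by
    apply mul_left_cancel₀ (PowerSeries.X_ne_zero (R := K))
    rw [← mul_assoc, X_mul_pdivX hh0, mul_one]
    have h4 := congrArg (fun A => pcomp A h) (X_mul_pdivX hbar0)
    simpa [pcomp_mul hh0, pcomp_X hh0, hinv2] using h4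
  have hQ0 : constantCoeff (pcomp (pdivX hbar) h) ≠ 0 := by
    rw [constantCoeff_pcomp]; exact hdbar
  have hQP : ∀ j, constantCoeff (pcomp (pdivX (pcomp (f j) hbar)) h) ≠ 0 := fun j => by
    rw [constantCoeff_pcomp]; exact hdB j
  have hQinv : (pcomp (pdivX hbar) h)⁻¹ = pdivX h := by
    symm; rw [PowerSeries.eq_inv_iff_mul_eq_one hQ0]; exact hQ
  -- cancellation facts
  have cb0 : (C b0) * (C b0)⁻¹ = 1 :=
    PowerSeries.mul_inv_cancel _ (by simpa [constantCoeff_C] using hb0)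
  have cg : g * g⁻¹ = 1 := PowerSeries.mul_inv_cancel _ hg0
  have cG : (pcomp g hbar) * (pcomp g hbar)⁻¹ = 1 := PowerSeries.mul_inv_cancel _ hG
  have ch : pdivX h * (pdivX h)⁻¹ = 1 := PowerSeries.mul_inv_cancel _ hdh
  have c1 : pdivX hbar * (pdivX hbar)⁻¹ = 1 := PowerSeries.mul_inv_cancel _ hdbar
  have cB : ∀ j, pdivX (pcomp (f j) hbar) * (pdivX (pcomp (f j) hbar))⁻¹ = 1 :=
    fun j => PowerSeries.mul_inv_cancel _ (hdB j)
  have cf : ∀ j, pdivX (f j) * (pdivX (f j))⁻¹ = 1 :=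
    fun j => PowerSeries.mul_inv_cancel _ (hdf j)
  have cP : ∀ j, pcomp (pdivX (pcomp (f j) hbar)) h *
      (pcomp (pdivX (pcomp (f j) hbar)) h)⁻¹ = 1 :=
    fun j => PowerSeries.mul_inv_cancel _ (hQP j)
  -- images of the inverse-array entries under composition with h
  have e1 : pcomp ((C b0)⁻¹) h = (C b0)⁻¹ := by
    rw [pcomp_inv hh0 (by simpa [constantCoeff_C] using hb0), pcomp_C]
  have e2 : pcomp ((pdivX hbar)⁻¹) h = pdivX h := by
    rw [pcomp_inv hh0 hdbar, hQinv]
  have e3 : pcomp ((pcomp g hbar)⁻¹) h = g⁻¹ := by rw [pcomp_inv hh0 hG, Eg]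
  have e4 : pcomp (C b0 - pcomp b hbar) h = C b0 - b := by
    rw [pcomp_sub, pcomp_C, Eb]
  set q1 := (C b0)⁻¹ +
      pdivX (pcomp (f (Fin.last m)) hbar) * (pdivX hbar)⁻¹ *
        (C b0)⁻¹ * (pcomp g hbar)⁻¹ * (C b0 - pcomp b hbar) with hq1def
  have hccq1 : constantCoeff q1 = b0⁻¹ := by
    rw [hq1def]
    simp [map_add, map_mul, map_sub, PowerSeries.constantCoeff_inv, constantCoeff_C,
      constantCoeff_pcomp, sub_self, mul_zero, add_zero]
    exact Or.inr (by rw [hb0def, sub_self])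
  have hq1h : pcomp q1 h = (C b0)⁻¹ +
      pcomp (pdivX (pcomp (f (Fin.last m)) hbar)) h * pdivX h *
        (C b0)⁻¹ * g⁻¹ * (C b0 - b) := by
    rw [hq1def, pcomp_add, pcomp_mul hh0, pcomp_mul hh0, pcomp_mul hh0, pcomp_mul hh0,
      e1, e2, e3, e4]
  have hqf : ∀ j, pdivX (hbar * (pdivX (pcomp (f j) hbar))⁻¹) =
      pdivX hbar * (pdivX (pcomp (f j) hbar))⁻¹ := fun j => pdivX_mul hbar0 _
  have hprodinv : (pdivX hbar * (pdivX (pcomp (f (Fin.last m)) hbar))⁻¹)⁻¹ =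
      (pdivX hbar)⁻¹ * pdivX (pcomp (f (Fin.last m)) hbar) := by
    symm
    rw [PowerSeries.eq_inv_iff_mul_eq_one (by
      rw [map_mul, PowerSeries.constantCoeff_inv, constantCoeff_pdivX, constantCoeff_pdivX]
      exact mul_ne_zero hbar1 (inv_ne_zero (hB1 (Fin.last m))))]
    rw [show ((pdivX hbar)⁻¹ * pdivX (pcomp (f (Fin.last m)) hbar)) *
        (pdivX hbar * (pdivX (pcomp (f (Fin.last m)) hbar))⁻¹) =
        (pdivX hbar * (pdivX hbar)⁻¹) *
          (pdivX (pcomp (f (Fin.last m)) hbar) * (pdivX (pcomp (f (Fin.last m)) hbar))⁻¹)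
      from by ring, c1, cB (Fin.last m), mul_one]
  constructor
  · simp only [maMul, Prod.mk.injEq]
    refine ⟨?_, ?_, ?_, ?_⟩
    · rw [hccq1, hq1h, ← PowerSeries.C_inv]
      linear_combination cb0 + (C b0)⁻¹ * (C b0 - b) * cg +
        g * (C b0)⁻¹ * g⁻¹ * (C b0 - b) * cf (Fin.last m) +
        g * (pdivX (f (Fin.last m)))⁻¹ * (C b0)⁻¹ * g⁻¹ * (C b0 - b) * hPd (Fin.last m)
    · rw [e3]; exact cg
    · funext j
      rw [pcomp_mul hh0, hinv2, pcomp_inv hh0 (hdB j), ← hPd j]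
      linear_combination (X * (pcomp (pdivX (pcomp (f j) hbar)) h *
          (pcomp (pdivX (pcomp (f j) hbar)) h)⁻¹)) * ch + X * cP j
    · exact hinv2
  · simp only [maMul, Prod.mk.injEq]
    refine ⟨?_, ?_, ?_, ?_⟩
    · rw [hqf (Fin.last m), hprodinv]
      linear_combination (1 + pdivX (pcomp (f (Fin.last m)) hbar) * (pdivX hbar)⁻¹ *
        (pcomp g hbar)⁻¹ * (C b0 - pcomp b hbar)) * cb0
    · exact PowerSeries.inv_mul_cancel _ hG
    · funext j
      rw [hqf j]
      linear_combination (-(pdivX hbar * (pdivX (pcomp (f j) hbar))⁻¹ * (pdivX hbar)⁻¹)) *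
          (X_mul_pdivX (hB0 j)) +
        (X * (pdivX (pcomp (f j) hbar) * (pdivX (pcomp (f j) hbar))⁻¹)) * c1 + X * cB j
    · exact hinv1
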